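/- arXiv:1007.2769 — 2 statements merged into one kernel-verified Lean document; each statement's English description precedes it below -/
import Mathlib

section
/- Two involutions v, w of the hyperoctahedral group B_n = G(2,n) are S_n-conjugate (i.e. there exists τ ∈ Perm(Fin n) with w = τ·v·τ⁻¹ under absolute conjugation) if and only if fix_0(v) = fix_0(w), fix_1(v) = fix_1(w), pair_0(v) = pair_0(w) and pair_1(v) = pair_1(w). -/
noncomputable section

/-- The wreath product `G(r,n) = C_r ≀ S_n`, realized as pairs of a color vector
`z : Fin n → ZMod r` and a permutation `p` of `Fin n`. -/
@[ext] structure WreathG (r n : ℕ) where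
  z : Fin n → ZMod r
  p : Equiv.Perm (Fin n)

namespace WreathG

variable {r n : ℕ}

instance : One (WreathG r n) := ⟨⟨0, 1⟩⟩
instance : Mul (WreathG r n) := ⟨fun g h => ⟨g.z + h.z ∘ g.p.symm, g.p * h.p⟩⟩
instance : Inv (WreathG r n) := ⟨fun g => ⟨-(g.z ∘ g.p), g.p⁻¹⟩⟩

@[simp] theorem one_z : (1 : WreathG r n).z = 0 := rfl
@[simp] theorem one_p : (1 : WreathG r n).p = 1 := rfl
@[simp] theorem mul_z (a b : WreathG r n) : (a * b).z = a.z + b.z ∘ a.p.symm := rfl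
@[simp] theorem mul_p (a b : WreathG r n) : (a * b).p = a.p * b.p := rfl
@[simp] theorem inv_z (a : WreathG r n) : (a⁻¹).z = -(a.z ∘ a.p) := rfl
@[simp] theorem inv_p (a : WreathG r n) : (a⁻¹).p = a.p⁻¹ := rfl

instance : Group (WreathG r n) :=
  Group.ofLeftAxioms
    (fun a b c => by
      refine WreathG.ext ?_ (mul_assoc a.p b.p c.p)
      funext x
      show (a.z x + b.z (a.p.symm x)) + c.z ((a.p * b.p).symm x)
          = a.z x + (b.z (a.p.symm x) + c.z (b.p.symm (a.p.symm x)))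
      have h : (a.p * b.p).symm x = b.p.symm (a.p.symm x) := rfl
      rw [h, add_assoc])
    (fun a => by
      refine WreathG.ext ?_ (one_mul a.p)
      funext x
      show 0 + a.z ((1 : Equiv.Perm (Fin n)).symm x) = a.z x
      simp; rfl)
    (fun a => by
      refine WreathG.ext ?_ (inv_mul_cancel a.p)
      funext x
      show -(a.z (a.p x)) + a.z ((a.p⁻¹).symm x) = 0
      have h : (a.p⁻¹).symm x = a.p x := rfl
      rw [h, neg_add_cancel])

/-- An absolute involution of `G(r,n)`: `|v|² = 1` and `z ∘ |v| = z`. -/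
def IsAbsInv (v : WreathG r n) : Prop := v.p ^ 2 = 1 ∧ v.z ∘ v.p = v.z

instance (v : WreathG r n) : Decidable (IsAbsInv v) :=
  inferInstanceAs (Decidable (_ ∧ _))

/-- Absolute conjugation `τ·(z,σ)·τ⁻¹ = (z ∘ τ⁻¹, τστ⁻¹)`. -/
def aconj (τ : Equiv.Perm (Fin n)) (v : WreathG r n) : WreathG r n :=
  ⟨v.z ∘ τ.symm, τ * v.p * τ⁻¹⟩

theorem IsAbsInv.aconj {v : WreathG r n} (h : IsAbsInv v) (τ : Equiv.Perm (Fin n)) :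
    IsAbsInv (WreathG.aconj τ v) := by
  obtain ⟨h1, h2⟩ := h
  constructor
  · show (τ * v.p * τ⁻¹) ^ 2 = 1
    have key : (τ * v.p * τ⁻¹) * (τ * v.p * τ⁻¹) = τ * (v.p * v.p) * τ⁻¹ := by
      simp [mul_assoc]
    rw [sq, key, ← sq, h1, mul_one, mul_inv_cancel]
  · funext x
    have := congrFun h2 (τ.symm x)
    simpa [WreathG.aconj, Function.comp] using this

/-- `⟨g,v⟩ = ∑ i z_i(g)·z_i(v) ∈ ZMod r`. -/
def pairing (g v : WreathG r n) : ZMod r := ∑ i, g.z i * v.z i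

/-- `inv_v(g)`: the number of pairs `i < j` with `|v|(i) = j` and `|g|(i) > |g|(j)`. -/
def invv (v g : WreathG r n) : ℕ :=
  Nat.card {q : Fin n × Fin n // q.1 < q.2 ∧ v.p q.1 = q.2 ∧ g.p q.2 < g.p q.1}

/-- The number of inversions of a permutation. -/
def invPerm (σ : Equiv.Perm (Fin n)) : ℕ :=
  Nat.card {q : Fin n × Fin n // q.1 < q.2 ∧ σ q.2 < σ q.1}

/-- `fix_i(v)`: the number of `j` with `|v|(j) = j` and `z_j(v) = i`. -/
def fixc (v : WreathG r n) (i : ZMod r) : ℕ :=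
  Nat.card {j : Fin n // v.p j = j ∧ v.z j = i}

/-- `pair_i(v)`: the number of pairs `j < k` with `|v|(j) = k` and `z_j(v) = z_k(v) = i`. -/
def pairc (v : WreathG r n) (i : ZMod r) : ℕ :=
  Nat.card {q : Fin n × Fin n // q.1 < q.2 ∧ v.p q.1 = q.2 ∧ v.z q.1 = i ∧ v.z q.2 = i}

instance : DecidableEq (WreathG r n) := fun a b =>
  decidable_of_iff (a.z = b.z ∧ a.p = b.p)
    (by constructor
        · rintro ⟨h1, h2⟩; exact WreathG.ext h1 h2
        · rintro rfl; exact ⟨rfl, rfl⟩)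

instance [NeZero r] : Fintype (WreathG r n) :=
  Fintype.ofEquiv ((Fin n → ZMod r) × Equiv.Perm (Fin n))
    { toFun := fun x => ⟨x.1, x.2⟩
      invFun := fun g => (g.z, g.p)
      left_inv := fun _ => rfl
      right_inv := fun _ => rfl }

end WreathG

/-- The set `I(r,n)` of absolute involutions, as a subtype. -/
abbrev AbsInv (r n : ℕ) := {v : WreathG r n // WreathG.IsAbsInv v}

/-- The model space `M`: the complex vector space with basis `{C_v : v ∈ I(r,n)}`. -/
abbrev ModelSpace (r n : ℕ) := AbsInv r n →₀ ℂ

/-- `ζ_r = exp(2πi/r)`. -/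
def zetaC (r : ℕ) : ℂ := Complex.exp (2 * Real.pi * Complex.I / r)

/-- `ζ_r` raised to an exponent in `ZMod r` (well defined since `ζ_r^r = 1`). -/
def zetaPow (r : ℕ) (a : ZMod r) : ℂ := zetaC r ^ a.val

/-- The Gelfand model operator `ϱ(g) C_v = ζ_r^{⟨g,v⟩} (−1)^{inv_v(g)} C_{|g|v|g|⁻¹}`. -/
def modelRho {r n : ℕ} (g : WreathG r n) :
    ModelSpace r n →ₗ[ℂ] ModelSpace r n :=
  Finsupp.lsum ℂ fun v =>
    ((zetaPow r (WreathG.pairing g v.1) * (-1 : ℂ) ^ WreathG.invv v.1 g) •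
      Finsupp.lsingle (⟨WreathG.aconj g.p v.1, v.2.aconj g.p⟩ : AbsInv r n))

/-- The auxiliary operator `φ(g) C_v = ζ_r^{⟨g,v⟩} C_{|g|v|g|⁻¹}`. -/
def modelPhi {r n : ℕ} (g : WreathG r n) :
    ModelSpace r n →ₗ[ℂ] ModelSpace r n :=
  Finsupp.lsum ℂ fun v =>
    ((zetaPow r (WreathG.pairing g v.1)) •
      Finsupp.lsingle (⟨WreathG.aconj g.p v.1, v.2.aconj g.p⟩ : AbsInv r n))

namespace WreathGAux

open WreathG

variable {r n : ℕ}

lemma p_p {v : WreathG r n} (hv : v.IsAbsInv) (j : Fin n) : v.p (v.p j) = j := by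
  have h := hv.1
  rw [sq, Equiv.ext_iff] at h
  simpa using h j

lemma z_p {v : WreathG r n} (hv : v.IsAbsInv) (j : Fin n) : v.z (v.p j) = v.z j :=
  congrFun hv.2 j

/-- The set of non-fixed points of color `i` has cardinality `2 * pairc v i`. -/
lemma card_moving (v : WreathG r n) (hv : v.IsAbsInv) (i : ZMod r) :
    Nat.card {j : Fin n // v.p j ≠ j ∧ v.z j = i} = 2 * WreathG.pairc v i := by
  classical
  have e : {j : Fin n // v.p j ≠ j ∧ v.z j = i} ≃
      ({q : Fin n × Fin n // q.1 < q.2 ∧ v.p q.1 = q.2 ∧ v.z q.1 = i ∧ v.z q.2 = i} × Bool) := by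
    refine
      { toFun := fun j => if h : (j : Fin n) < v.p j
          then (⟨(j.1, v.p j.1), h, rfl, j.2.2, by rw [z_p hv]; exact j.2.2⟩, true)
          else (⟨(v.p j.1, j.1), lt_of_le_of_ne (not_lt.mp h) j.2.1, p_p hv j.1,
                by rw [z_p hv]; exact j.2.2, j.2.2⟩, false)
        invFun := fun x => if x.2 then ⟨x.1.1.1, ?_, x.1.2.2.2.1⟩
          else ⟨x.1.1.2, ?_, x.1.2.2.2.2⟩
        left_inv := ?_
        right_inv := ?_ }
    · rw [x.1.2.2.1]; exact (ne_of_lt x.1.2.1).symm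
    · rw [show v.p x.1.1.2 = x.1.1.1 by rw [← x.1.2.2.1, p_p hv]]
      exact ne_of_lt x.1.2.1
    · intro j
      by_cases h : (j : Fin n) < v.p j
      · simp [h]
      · simp [h]
    · rintro ⟨⟨⟨a, b⟩, hab, hpab, ha, hb⟩, c⟩
      dsimp only at hab hpab ha hb
      rcases c with _ | _
      · -- c = false: invFun gives b, and v.p b = a < b
        have hpb : v.p b = a := by rw [← hpab]; exact p_p hv a
        have : ¬ (b < v.p b) := by rw [hpb]; exact not_lt.mpr (le_of_lt hab)
        simp only [if_neg, Bool.false_eq_true, if_false, dif_neg this]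
        simp [hpb]
      · have : (a : Fin n) < v.p a := by rw [hpab]; exact hab
        simp only [if_pos, if_true, dif_pos this]
        simp [hpab]
  rw [Nat.card_congr e, Nat.card_prod]
  simp only [Nat.card_eq_fintype_card, Fintype.card_bool]
  rw [WreathG.pairc, mul_comm]
  simp [Nat.card_eq_fintype_card]

/-- A fixed-point-free involution has cycle type `replicate (card/2) 2`. -/
lemma cycleType_fpf {α : Type*} [Fintype α] [DecidableEq α] (σ : Equiv.Perm α)
    (h2 : ∀ x, σ (σ x) = x) (hf : ∀ x, σ x ≠ x) :
    σ.cycleType = Multiset.replicate (Fintype.card α / 2) 2 := by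
  have hpow : σ ^ 2 = 1 := by
    ext x; simp [sq, h2 x]
  have horder : orderOf σ ∣ 2 := orderOf_dvd_of_pow_eq_one hpow
  have hall : ∀ a ∈ σ.cycleType, a = 2 := by
    intro a ha
    have h1 : 2 ≤ a := Equiv.Perm.two_le_of_mem_cycleType ha
    have hdvd : a ∣ 2 := by
      refine dvd_trans ?_ horder
      rw [← Equiv.Perm.lcm_cycleType]
      exact Multiset.dvd_lcm ha
    have := Nat.le_of_dvd (by norm_num) hdvd
    omega
  have hsupp : σ.support = Finset.univ := by
    ext x; simp [Equiv.Perm.mem_support, hf x]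
  have hsum : σ.cycleType.sum = Fintype.card α := by
    rw [Equiv.Perm.sum_cycleType, hsupp, Finset.card_univ]
  have hrep : σ.cycleType = Multiset.replicate (Multiset.card σ.cycleType) 2 :=
    Multiset.eq_replicate_card.mpr hall
  have hsum2 : σ.cycleType.sum = Multiset.card σ.cycleType * 2 := by
    conv_lhs => rw [hrep]
    rw [Multiset.sum_replicate, smul_eq_mul]
  conv_lhs => rw [hrep]
  congr 1
  omega

/-- Two fixed-point-free involutions on equinumerous finite types are intertwined
by some equivalence. -/
lemma exists_inter {α β : Type*} [Fintype α] [DecidableEq α] [Fintype β] [DecidableEq β]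
    (σ : Equiv.Perm α) (τ : Equiv.Perm β) (hcard : Fintype.card α = Fintype.card β)
    (hσ2 : ∀ x, σ (σ x) = x) (hτ2 : ∀ x, τ (τ x) = x)
    (hσf : ∀ x, σ x ≠ x) (hτf : ∀ x, τ x ≠ x) :
    ∃ f : α ≃ β, ∀ x, τ (f x) = f (σ x) := by
  have e : α ≃ β := Fintype.equivOfCardEq hcard
  set σ' : Equiv.Perm β := e.symm.trans (σ.trans e) with hσ'
  have hσ'app : ∀ x, σ' x = e (σ (e.symm x)) := fun x => rfl
  have hσ'2 : ∀ x, σ' (σ' x) = x := by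
    intro x
    simp [hσ'app, hσ2]
  have hσ'f : ∀ x, σ' x ≠ x := by
    intro x hx
    rw [hσ'app] at hx
    exact hσf (e.symm x) (by simpa using congrArg e.symm hx)
  have hconj : IsConj σ' τ := by
    rw [Equiv.Perm.isConj_iff_cycleType_eq, cycleType_fpf σ' hσ'2 hσ'f,
      cycleType_fpf τ hτ2 hτf]
  obtain ⟨c, hc⟩ := isConj_iff.mp hconj
  refine ⟨e.trans c, fun x => ?_⟩
  have : τ (c (e x)) = c (σ' (e x)) := by
    rw [← hc]
    simp [Equiv.Perm.mul_apply]
  simpa [hσ'app] using this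

end WreathGAux

/-- Two involutions of `B_n = G(2,n)` are `S_n`-conjugate if and only if
they have the same statistics `fix_0`, `fix_1`, `pair_0`, `pair_1`. -/
theorem sConjugate_iff_same_statistics_B (n : ℕ) (hn : 0 < n) (v w : WreathG 2 n)
    (hv : WreathG.IsAbsInv v) (hw : WreathG.IsAbsInv w) :
    (∃ τ : Equiv.Perm (Fin n), w = WreathG.aconj τ v) ↔
      (WreathG.fixc v 0 = WreathG.fixc w 0 ∧ WreathG.fixc v 1 = WreathG.fixc w 1 ∧
       WreathG.pairc v 0 = WreathG.pairc w 0 ∧ WreathG.pairc v 1 = WreathG.pairc w 1) := by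
  classical
  open WreathGAux in
  constructor
  · rintro ⟨τ, rfl⟩
    set w := WreathG.aconj τ v with hwdef
    have hp : ∀ j, w.p j = τ (v.p (τ.symm j)) := fun j => rfl
    have hz : ∀ j, w.z j = v.z (τ.symm j) := fun j => rfl
    have hfix : ∀ i : ZMod 2, WreathG.fixc v i = WreathG.fixc w i := by
      intro i
      refine Nat.card_congr (Equiv.subtypeEquiv τ fun j => ?_).symm.symm
      constructor
      · rintro ⟨h1, h2⟩
        refine ⟨?_, ?_⟩
        · rw [hp]; simp [h1]
        · rw [hz]; simpa using h2
      · rintro ⟨h1, h2⟩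
        rw [hp] at h1; rw [hz] at h2
        simp only [Equiv.symm_apply_apply] at h1 h2
        exact ⟨τ.injective (by simpa using h1), h2⟩
    have hmov : ∀ i : ZMod 2,
        Nat.card {j : Fin n // v.p j ≠ j ∧ v.z j = i}
          = Nat.card {j : Fin n // w.p j ≠ j ∧ w.z j = i} := by
      intro i
      refine Nat.card_congr (Equiv.subtypeEquiv τ fun j => ?_)
      constructor
      · rintro ⟨h1, h2⟩
        refine ⟨?_, ?_⟩
        · rw [hp]; simpa using fun hc => h1 (τ.injective (by simpa using hc))
        · rw [hz]; simpa using h2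
      · rintro ⟨h1, h2⟩
        rw [hp] at h1; rw [hz] at h2
        simp only [Equiv.symm_apply_apply] at h1 h2
        refine ⟨fun hc => h1 ?_, h2⟩
        rw [hc]
    have hpair : ∀ i : ZMod 2, WreathG.pairc v i = WreathG.pairc w i := by
      intro i
      have h1 := WreathGAux.card_moving v hv i
      have h2 := WreathGAux.card_moving w (hv.aconj τ) i
      have := hmov i
      omega
    exact ⟨hfix 0, hfix 1, hpair 0, hpair 1⟩
  · rintro ⟨hf0, hf1, hp0, hp1⟩
    -- the "color + fixedness" invariant
    set cv : Fin n → Bool × ZMod 2 := fun j => (decide (v.p j = j), v.z j) with hcv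
    set cw : Fin n → Bool × ZMod 2 := fun j => (decide (w.p j = j), w.z j) with hcw
    have hcvp : ∀ j, cv (v.p j) = cv j := by
      intro j
      simp only [hcv, Prod.mk.injEq]
      constructor
      · rw [WreathGAux.p_p hv]
        exact decide_eq_decide.mpr eq_comm
      · exact WreathGAux.z_p hv j
    have hcwp : ∀ j, cw (w.p j) = cw j := by
      intro j
      simp only [hcw, Prod.mk.injEq]
      constructor
      · rw [WreathGAux.p_p hw]
        exact decide_eq_decide.mpr eq_comm
      · exact WreathGAux.z_p hw j
    -- fiber equivalences for fixed classes
    have efixv : ∀ i : ZMod 2, {j : Fin n // cv j = (true, i)} ≃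
        {j : Fin n // v.p j = j ∧ v.z j = i} :=
      fun i => Equiv.subtypeEquivRight fun j => by simp [hcv, Prod.ext_iff]
    have efixw : ∀ i : ZMod 2, {j : Fin n // cw j = (true, i)} ≃
        {j : Fin n // w.p j = j ∧ w.z j = i} :=
      fun i => Equiv.subtypeEquivRight fun j => by simp [hcw, Prod.ext_iff]
    have emovv : ∀ i : ZMod 2, {j : Fin n // cv j = (false, i)} ≃
        {j : Fin n // v.p j ≠ j ∧ v.z j = i} :=
      fun i => Equiv.subtypeEquivRight fun j => by simp [hcv, Prod.ext_iff]
    have emovw : ∀ i : ZMod 2, {j : Fin n // cw j = (false, i)} ≃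
        {j : Fin n // w.p j ≠ j ∧ w.z j = i} :=
      fun i => Equiv.subtypeEquivRight fun j => by simp [hcw, Prod.ext_iff]
    have hfibcard : ∀ y : Bool × ZMod 2,
        Fintype.card {j : Fin n // cv j = y} = Fintype.card {j : Fin n // cw j = y} := by
      rintro ⟨b, i⟩
      have hi : i = 0 ∨ i = 1 := by revert i; decide
      cases b
      · -- moving
        rw [Fintype.card_congr (emovv i), Fintype.card_congr (emovw i)]
        have h1 := WreathGAux.card_moving v hv i
        have h2 := WreathGAux.card_moving w hw i
        rw [Nat.card_eq_fintype_card] at h1 h2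
        rcases hi with rfl | rfl
        · omega
        · omega
      · -- fixed
        rw [Fintype.card_congr (efixv i), Fintype.card_congr (efixw i)]
        rw [← Nat.card_eq_fintype_card, ← Nat.card_eq_fintype_card]
        rcases hi with rfl | rfl
        · exact hf0
        · exact hf1
    -- intertwining fiber equivalences
    have hmain : ∀ y : Bool × ZMod 2, ∃ E : {j : Fin n // cv j = y} ≃ {j : Fin n // cw j = y},
        ∀ (x x' : {j : Fin n // cv j = y}), (x' : Fin n) = v.p x →
          (E x' : Fin n) = w.p (E x) := by
      rintro ⟨b, i⟩
      cases b
      · -- moving classes: intertwine the two fixed-point-free involutions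
        have hstabv : ∀ j : Fin n, cv j = (false, i) ↔ cv (v.p j) = (false, i) := by
          intro j; rw [hcvp j]
        have hstabw : ∀ j : Fin n, cw j = (false, i) ↔ cw (w.p j) = (false, i) := by
          intro j; rw [hcwp j]
        set σ := v.p.subtypePerm (p := fun j => cv j = (false, i)) (fun j => (hstabv j).symm) with hσ
        set τ' := w.p.subtypePerm (p := fun j => cw j = (false, i)) (fun j => (hstabw j).symm) with hτ'
        have hmovv' : ∀ x : {j : Fin n // cv j = (false, i)}, v.p (x : Fin n) ≠ (x : Fin n) := by
          intro x hx
          have := x.2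
          simp only [hcv, Prod.mk.injEq] at this
          rw [decide_eq_false_iff_not] at this
          exact this.1 hx
        have hmovw' : ∀ x : {j : Fin n // cw j = (false, i)}, w.p (x : Fin n) ≠ (x : Fin n) := by
          intro x hx
          have := x.2
          simp only [hcw, Prod.mk.injEq] at this
          rw [decide_eq_false_iff_not] at this
          exact this.1 hx
        obtain ⟨f, hf⟩ := WreathGAux.exists_inter σ τ' (hfibcard (false, i))
          (fun x => Subtype.ext (by simp [hσ, Equiv.Perm.subtypePerm_apply, WreathGAux.p_p hv]))
          (fun x => Subtype.ext (by simp [hτ', Equiv.Perm.subtypePerm_apply, WreathGAux.p_p hw]))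
          (fun x hx => hmovv' x (congrArg Subtype.val hx))
          (fun x hx => hmovw' x (congrArg Subtype.val hx))
        refine ⟨f, fun x x' hx' => ?_⟩
        have hx'' : x' = σ x := Subtype.ext (by simpa [hσ, Equiv.Perm.subtypePerm_apply] using hx')
        rw [hx'', ← hf x]
        simp [hτ', Equiv.Perm.subtypePerm_apply]
      · -- fixed classes: any bijection works
        refine ⟨Fintype.equivOfCardEq (hfibcard (true, i)), fun x x' hx' => ?_⟩
        have hfixx : v.p (x : Fin n) = (x : Fin n) := by
          have := x.2
          simp only [hcv, Prod.mk.injEq] at this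
          rw [decide_eq_true_iff] at this
          exact this.1
        have hx'' : x' = x := Subtype.ext (by rw [hx', hfixx])
        set y := Fintype.equivOfCardEq (hfibcard ((true : Bool), i)) x with hy
        have hfixy : w.p (y : Fin n) = (y : Fin n) := by
          have := y.2
          simp only [hcw, Prod.mk.injEq] at this
          rw [decide_eq_true_iff] at this
          exact this.1
        rw [hx'', ← hy, hfixy]
    choose E hE using hmain
    set τ : Equiv.Perm (Fin n) :=
      ((Equiv.sigmaFiberEquiv cv).symm.trans (Equiv.sigmaCongrRight E)).trans
        (Equiv.sigmaFiberEquiv cw) with hτdef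
    have hτapp : ∀ j : Fin n, τ j = (E (cv j) ⟨j, rfl⟩ : Fin n) := fun j => rfl
    have hEcongr : ∀ (y y' : Bool × ZMod 2) (h : y = y') (x : {j : Fin n // cv j = y})
        (x' : {j : Fin n // cv j = y'}), (x : Fin n) = (x' : Fin n) →
        (E y x : Fin n) = (E y' x' : Fin n) := by
      rintro y y' rfl x x' hxx
      rw [Subtype.ext hxx]
    have hcwτ : ∀ j : Fin n, cw (τ j) = cv j := fun j => (E (cv j) ⟨j, rfl⟩).2
    have hzτ : ∀ j : Fin n, w.z (τ j) = v.z j := by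
      intro j
      have := hcwτ j
      simp only [hcv, hcw, Prod.mk.injEq] at this
      exact this.2
    have hpτ : ∀ j : Fin n, w.p (τ j) = τ (v.p j) := by
      intro j
      rw [hτapp j, hτapp (v.p j)]
      have h1 : (E (cv (v.p j)) ⟨v.p j, rfl⟩ : Fin n)
          = (E (cv j) ⟨v.p j, hcvp j⟩ : Fin n) :=
        hEcongr _ _ (hcvp j) _ _ rfl
      rw [h1]
      exact (hE (cv j) ⟨j, rfl⟩ ⟨v.p j, hcvp j⟩ rfl).symm
    refine ⟨τ, ?_⟩
    refine WreathG.ext ?_ ?_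
    · funext x
      show w.z x = v.z (τ.symm x)
      rw [← hzτ (τ.symm x), Equiv.apply_symm_apply]
    · show w.p = τ * v.p * τ⁻¹
      ext x
      have := hpτ (τ.symm x)
      rw [Equiv.apply_symm_apply] at this
      simp only [Equiv.Perm.mul_apply]
      rw [this]
      rfl
end
end

section
/- Let m ≥ 1 and let τ be the fixed-point-free involution of {1,…,2m} with τ(2k−1) = 2k for k = 1,…,m. Let p_0, p_1 ∈ ℕ with p_0 + p_1 = m, and let σ be a permutation of {1,…,2m} such that σ commutes with τ (equivalently, σ(i+1) = σ(i) ± 1 for every odd i with 0 < i < 2m) and σ maps {1,…,2p_0} onto itself. Then inv(σ) ≡ #{{i,j} : τ(i) = j ≠ i and {i,j} is an inversion of σ} (mod 2). -/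
private lemma even_card_of_invol {α : Type*} [DecidableEq α] (s : Finset α) (g : α → α)
    (h1 : ∀ x ∈ s, g x ∈ s) (h2 : ∀ x ∈ s, g (g x) = x) (h3 : ∀ x ∈ s, g x ≠ x) :
    Even s.card := by
  induction s using Finset.strongInduction with
  | _ s ih =>
    rcases s.eq_empty_or_nonempty with rfl | ⟨a, ha⟩
    · simp
    · have hga : g a ∈ s := h1 a ha
      have hne : g a ≠ a := h3 a ha
      set t := (s.erase a).erase (g a) with ht
      have htsub : t ⊆ s := (Finset.erase_subset _ _).trans (Finset.erase_subset _ _)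
      have htss : t ⊂ s := (Finset.ssubset_iff_of_subset htsub).2 ⟨a, ha, by simp [ht]⟩
      have hmem : ∀ x ∈ t, x ∈ s ∧ x ≠ a ∧ x ≠ g a := by
        intro x hx
        simp only [ht, Finset.mem_erase] at hx
        exact ⟨hx.2.2, hx.2.1, hx.1⟩
      have h1' : ∀ x ∈ t, g x ∈ t := by
        intro x hx
        obtain ⟨hxs, hxa, hxga⟩ := hmem x hx
        simp only [ht, Finset.mem_erase]
        refine ⟨?_, ?_, h1 x hxs⟩
        · intro h; exact hxa (by rw [← h2 x hxs, h, h2 a ha])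
        · intro h; exact hxga (by rw [← h2 x hxs, h])
      have hcard : s.card = t.card + 2 := by
        have h1c : (s.erase a).card = s.card - 1 := Finset.card_erase_of_mem ha
        have h2c : t.card = (s.erase a).card - 1 :=
          Finset.card_erase_of_mem (Finset.mem_erase.2 ⟨hne, hga⟩)
        have : 1 < s.card := Finset.one_lt_card.2 ⟨a, ha, g a, hga, hne.symm⟩
        omega
      have := ih t htss (fun x hx => h1' x hx)
        (fun x hx => h2 x (hmem x hx).1) (fun x hx => h3 x (hmem x hx).1)
      rw [hcard]
      obtain ⟨r, hr⟩ := this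
      exact ⟨r + 1, by omega⟩
/-- Let `τ` be the fixed-point-free involution of `{1,…,2m}` with
`τ(2k−1) = 2k` (here `0`-indexed: `τ(2k) = 2k+1` and `τ(2k+1) = 2k`).  If `σ` is a
permutation commuting with `τ` which maps `{1,…,2p₀}` onto itself, then the number of
inversions of `σ` is congruent mod `2` to the number of inversions `{i,j}` of `σ` that are
pairs of `τ` (i.e. `τ(i) = j ≠ i`). -/
theorem inv_congr_invPairs_mod_two (m p₀ p₁ : ℕ) (hm : 1 ≤ m) (hp : p₀ + p₁ = m)
    (τ σ : Equiv.Perm (Fin (2 * m)))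
    (hτ₁ : ∀ k : Fin m, τ ⟨2 * k.val, by have := k.isLt; omega⟩ =
      ⟨2 * k.val + 1, by have := k.isLt; omega⟩)
    (hτ₂ : ∀ k : Fin m, τ ⟨2 * k.val + 1, by have := k.isLt; omega⟩ =
      ⟨2 * k.val, by have := k.isLt; omega⟩)
    (hcomm : σ * τ = τ * σ)
    (hblock : ∀ i : Fin (2 * m), (σ i).val < 2 * p₀ ↔ i.val < 2 * p₀) :
    Nat.card {q : Fin (2 * m) × Fin (2 * m) // q.1 < q.2 ∧ σ q.2 < σ q.1} ≡
      Nat.card {q : Fin (2 * m) × Fin (2 * m) //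
        q.1 < q.2 ∧ τ q.1 = q.2 ∧ q.2 ≠ q.1 ∧ σ q.2 < σ q.1} [MOD 2] := by
  -- value of τ
  have hτval : ∀ i : Fin (2 * m),
      (τ i).val = if i.val % 2 = 0 then i.val + 1 else i.val - 1 := by
    intro i
    have hi := i.isLt
    rcases Nat.even_or_odd i.val with he | ho
    · have he0 : i.val % 2 = 0 := Nat.even_iff.1 he
      have hk : i.val / 2 < m := by omega
      have h := hτ₁ ⟨i.val / 2, hk⟩
      have heq : (⟨2 * (⟨i.val / 2, hk⟩ : Fin m).val, by omega⟩ : Fin (2 * m)) = i := by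
        apply Fin.ext; show 2 * (i.val / 2) = i.val; omega
      rw [heq] at h
      have hv : (τ i).val = 2 * (i.val / 2) + 1 := by rw [h]
      rw [if_pos he0]
      omega
    · have ho1 : i.val % 2 = 1 := Nat.odd_iff.1 ho
      have hk : i.val / 2 < m := by omega
      have h := hτ₂ ⟨i.val / 2, hk⟩
      have heq : (⟨2 * (⟨i.val / 2, hk⟩ : Fin m).val + 1, by omega⟩ : Fin (2 * m)) = i := by
        apply Fin.ext; show 2 * (i.val / 2) + 1 = i.val; omega
      rw [heq] at h
      have hv : (τ i).val = 2 * (i.val / 2) := by rw [h]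
      rw [if_neg (by omega)]
      omega
  have hττ : ∀ i : Fin (2 * m), τ (τ i) = i := by
    intro i
    apply Fin.ext
    have h1 := hτval i
    have h2 := hτval (τ i)
    have hi := i.isLt
    rcases Nat.even_or_odd i.val with he | ho
    · have he0 : i.val % 2 = 0 := Nat.even_iff.1 he
      rw [if_pos he0] at h1
      rw [if_neg (by omega)] at h2
      omega
    · have ho1 : i.val % 2 = 1 := Nat.odd_iff.1 ho
      rw [if_neg (by omega)] at h1
      rw [if_pos (by omega)] at h2
      omega
  -- order lemma
  have key : ∀ i j : Fin (2 * m), i.val < j.val → τ i ≠ j → (τ i).val < (τ j).val := by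
    intro i j hij hne
    have h1 := hτval i
    have h2 := hτval j
    by_cases hi : i.val % 2 = 0
    · rw [if_pos hi] at h1
      by_cases hj : j.val % 2 = 0
      · rw [if_pos hj] at h2; omega
      · rw [if_neg hj] at h2
        have : j.val ≠ i.val + 1 := fun h => hne (Fin.ext (by omega))
        omega
    · rw [if_neg hi] at h1
      by_cases hj : j.val % 2 = 0
      · rw [if_pos hj] at h2; omega
      · rw [if_neg hj] at h2; omega
  -- pointwise commutation
  have hc : ∀ x : Fin (2 * m), σ (τ x) = τ (σ x) := by
    intro x
    have := congrArg (fun f => f x) hcomm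
    simpa [Equiv.Perm.mul_apply] using this
  classical
  rw [Nat.card_eq_fintype_card, Nat.card_eq_fintype_card, Fintype.card_subtype,
    Fintype.card_subtype]
  set s : Finset (Fin (2 * m) × Fin (2 * m)) :=
    Finset.univ.filter (fun q => q.1 < q.2 ∧ σ q.2 < σ q.1) with hs
  have hsplit := Finset.card_filter_add_card_filter_not
    (s := s) (p := fun q => τ q.1 = q.2)
  -- the pair-inversion set equals the first filter
  have hP : Finset.univ.filter
      (fun q : Fin (2 * m) × Fin (2 * m) => q.1 < q.2 ∧ τ q.1 = q.2 ∧ q.2 ≠ q.1 ∧ σ q.2 < σ q.1)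
      = s.filter (fun q => τ q.1 = q.2) := by
    rw [hs, Finset.filter_filter]
    apply Finset.filter_congr
    intro q _
    constructor
    · rintro ⟨h1, h2, h3, h4⟩; exact ⟨⟨h1, h4⟩, h2⟩
    · rintro ⟨⟨h1, h4⟩, h2⟩; exact ⟨h1, h2, h1.ne', h4⟩
  -- the non-pair inversion set has even cardinality
  have heven : Even (s.filter (fun q => ¬ τ q.1 = q.2)).card := by
    apply even_card_of_invol _ (fun q => (τ q.1, τ q.2))
    · rintro ⟨x, y⟩ hx
      simp only [hs, Finset.mem_filter, Finset.mem_univ, true_and] at hx ⊢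
      obtain ⟨⟨h1, h2⟩, h3⟩ := hx
      have hτσ : τ (σ y) ≠ σ x := by
        intro h
        rw [← hc] at h
        have := σ.injective h
        apply h3
        rw [← this, hττ]
      refine ⟨⟨?_, ?_⟩, ?_⟩
      · exact key x y h1 h3
      · rw [hc, hc]
        exact key (σ y) (σ x) h2 hτσ
      · intro h
        rw [hττ] at h
        exact h3 (by rw [h, hττ])
    · rintro ⟨x, y⟩ hx
      simp [hττ]
    · rintro ⟨x, y⟩ hx
      intro h
      have h1 : τ x = x := congrArg Prod.fst h
      have h2 := hτval x
      have h3 := congrArg Fin.val h1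
      by_cases hp2 : x.val % 2 = 0
      · rw [if_pos hp2] at h2; omega
      · rw [if_neg hp2] at h2; omega
  rw [hP]
  obtain ⟨r, hr⟩ := heven
  unfold Nat.ModEq
  omega
end
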